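/- Let G be a profinite group and let φ̃ : G̃ → G be a universal Frattini cover of G. Then a finite group B is a continuous quotient of G̃ if and only if B/Φ(B) is a continuous quotient of G, where Φ(B) denotes the Frattini subgroup of B. -/

import Mathlib

open Function

noncomputable section

/-- The Frattini subgroup of a topological group: the intersection of all maximal open
subgroups. -/
def frattiniOpen (G : Type*) [Group G] [TopologicalSpace G] : Subgroup G :=
  ⨅ M ∈ {M : Subgroup G | IsOpen (M : Set G) ∧ IsCoatom M}, M

/-- A Frattini cover: a continuous epimorphism whose kernel is contained in the Frattini
subgroup of the source. -/
def IsFrattiniCover {H G : Type*} [Group H] [TopologicalSpace H] [Group G] [TopologicalSpace G]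
    (φ : H →* G) : Prop :=
  Continuous φ ∧ Surjective φ ∧ φ.ker ≤ frattiniOpen H

/-- A universal Frattini cover: a Frattini cover through which every Frattini cover by a
profinite group factors via a continuous epimorphism. -/
def IsUniversalFrattiniCover {tG G : Type*} [Group tG] [TopologicalSpace tG] [Group G]
    [TopologicalSpace G] (φt : tG →* G) : Prop :=
  IsFrattiniCover φt ∧
    ∀ (H : Type) [Group H] [TopologicalSpace H] [IsTopologicalGroup H] [CompactSpace H]
      [T2Space H] [TotallyDisconnectedSpace H] (β : H →* G), IsFrattiniCover β →
        ∃ γ : tG →* H, Continuous γ ∧ Surjective γ ∧ β.comp γ = φt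

/-- A topological group is pro-`ℓ` if each of its continuous finite quotients is an
`ℓ`-group. -/
def IsProL (ℓ : ℕ) (H : Type*) [Group H] [TopologicalSpace H] : Prop :=
  ∀ (Q : Type) [Group Q] [Finite Q] (φ : H →* Q),
    Surjective φ → IsOpen (φ.ker : Set H) → IsPGroup ℓ Q

end

-- AUX
lemma exists_min_mem {α : Type*} [PartialOrder α] (S : Set α) (x : α) (hx : x ∈ S)
    (h : ∀ c ⊆ S, IsChain (· ≤ ·) c → c.Nonempty → ∃ lb ∈ S, ∀ z ∈ c, lb ≤ z) :
    ∃ m ∈ S, ∀ a ∈ S, a ≤ m → a = m := by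
  obtain ⟨m, -, hmS, hmax⟩ := zorn_le_nonempty₀ (α := αᵒᵈ) S (fun c hc hchain y hyc => by
      obtain ⟨lb, hlbS, hlb⟩ := h c hc hchain.symm ⟨y, hyc⟩
      exact ⟨lb, hlbS, fun z hz => hlb z hz⟩) x hx
  exact ⟨m, hmS, fun a ha hle => le_antisymm hle (hmax ha hle)⟩

open Subgroup in
lemma frattiniOpen_le_comap_frattini {H B : Type*} [Group H] [TopologicalSpace H]
    [Group B] [TopologicalSpace B] [DiscreteTopology B]
    (f : H →* B) (hc : Continuous f) (hs : Surjective f) :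
    frattiniOpen H ≤ (frattini B).comap f := by
  rw [frattini, Order.radical, comap_iInf]
  refine le_iInf fun M => ?_
  rw [comap_iInf]
  refine le_iInf fun hM => ?_
  refine biInf_le _ ?_
  exact ⟨(isOpen_discrete (M : Set B)).preimage hc, isCoatom_comap_of_surjective hs hM⟩


/-- Let `G` be a profinite group and `φt : G̃ → G` a universal Frattini
cover of `G`.  Then a finite group `B` is a continuous quotient of `G̃` if and only if
`B/Φ(B)` is a continuous quotient of `G`, where `Φ(B)` denotes the Frattini subgroup
of `B`. -/
theorem statement_0 (G tG : Type) [Group G] [TopologicalSpace G] [IsTopologicalGroup G]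
    [CompactSpace G] [T2Space G] [TotallyDisconnectedSpace G]
    [Group tG] [TopologicalSpace tG] [IsTopologicalGroup tG]
    [CompactSpace tG] [T2Space tG] [TotallyDisconnectedSpace tG]
    (φt : tG →* G) (huniv : IsUniversalFrattiniCover φt)
    (B : Type) [Group B] [Finite B] [TopologicalSpace B] [DiscreteTopology B] :
    (∃ ψ : tG →* B, Continuous ψ ∧ Function.Surjective ψ) ↔
      ∃ ψ : G →* B ⧸ frattini B, Continuous ψ ∧ Function.Surjective ψ := by
  obtain ⟨⟨hφc, hφs, hφker⟩, hfactor⟩ := huniv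
  haveI : IsTopologicalGroup B :=
    { continuous_mul := continuous_of_discreteTopology
      continuous_inv := continuous_of_discreteTopology }
  haveI : DiscreteTopology (B ⧸ frattini B) := by
    apply discreteTopology_of_isOpen_singleton_one
    have himg : (QuotientGroup.mk '' (frattini B : Set B) : Set (B ⧸ frattini B)) = {1} := by
      ext q
      simp only [Set.mem_image, Set.mem_singleton_iff]
      constructor
      · rintro ⟨b, hb, rfl⟩
        exact (QuotientGroup.eq_one_iff b).mpr hb
      · rintro rfl
        exact ⟨1, (frattini B).one_mem, rfl⟩
    rw [← himg]
    exact QuotientGroup.isOpenMap_coe _ (isOpen_discrete _)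
  constructor
  · rintro ⟨ψB, hc, hs⟩
    set ψ0 : tG →* B ⧸ frattini B := (QuotientGroup.mk' (frattini B)).comp ψB with hψ0
    have hc0 : Continuous ψ0 := continuous_quotient_mk'.comp hc
    have hs0 : Surjective ψ0 := (QuotientGroup.mk'_surjective _).comp hs
    have hker : φt.ker ≤ ψ0.ker := by
      intro x hx
      have h1 : x ∈ frattiniOpen tG := hφker hx
      have h2 := frattiniOpen_le_comap_frattini ψB hc hs h1
      simpa [hψ0, MonoidHom.mem_ker, QuotientGroup.eq_one_iff] using h2
    set ψ : G →* B ⧸ frattini B := φt.liftOfSurjective hφs ⟨ψ0, hker⟩ with hψ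
    have hcomp : ∀ x : tG, ψ (φt x) = ψ0 x := fun x =>
      φt.liftOfRightInverse_comp_apply _ _ ⟨ψ0, hker⟩ x
    have hq : Topology.IsQuotientMap φt := Topology.IsQuotientMap.of_surjective_continuous hφs hφc
    refine ⟨ψ, ?_, ?_⟩
    · rw [hq.continuous_iff]
      have : (⇑ψ ∘ ⇑φt) = ⇑ψ0 := funext hcomp
      rw [this]; exact hc0
    · intro q
      obtain ⟨x, hx⟩ := hs0 q
      exact ⟨φt x, by rw [hcomp x, hx]⟩
  · rintro ⟨ψ, hψc, hψs⟩
    -- fiber product subgroup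
    set f1 : B × G →* B ⧸ frattini B := (QuotientGroup.mk' (frattini B)).comp (MonoidHom.fst B G)
      with hf1
    set f2 : B × G →* B ⧸ frattini B := ψ.comp (MonoidHom.snd B G) with hf2
    set H0 : Subgroup (B × G) := f1.eqLocus f2 with hH0
    have hf1c : Continuous f1 := continuous_quotient_mk'.comp continuous_fst
    have hf2c : Continuous f2 := hψc.comp continuous_snd
    set S : Set (Subgroup (B × G)) :=
      {C | C ≤ H0 ∧ IsClosed (C : Set (B × G)) ∧ ∀ g : G, ∃ c ∈ C, c.2 = g} with hS
    have hH0S : H0 ∈ S := by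
      refine ⟨le_rfl, isClosed_eq hf1c hf2c, fun g => ?_⟩
      obtain ⟨b, hb⟩ := QuotientGroup.mk'_surjective (frattini B) (ψ g)
      exact ⟨(b, g), hb, rfl⟩
    -- Zorn: minimal closed subgroup of H0 surjecting onto G
    obtain ⟨C, hCS, hCmin⟩ := exists_min_mem S H0 hH0S (fun c hcS hchain hcne => by
      obtain ⟨y, hyc⟩ := hcne
      refine ⟨sInf c, ⟨?_, ?_, ?_⟩, fun z hz => sInf_le hz⟩
      · exact le_trans (sInf_le hyc) (hcS hyc).1
      · rw [Subgroup.coe_sInf]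
        exact isClosed_biInter fun D hD => (hcS hD).2.1
      · intro g
        haveI : Nonempty c := ⟨⟨y, hyc⟩⟩
        have hne : (⋂ D : c, ((D : Subgroup (B × G)) : Set (B × G)) ∩
            (Prod.snd ⁻¹' {g})).Nonempty := by
          apply IsCompact.nonempty_iInter_of_directed_nonempty_isCompact_isClosed
          · rintro ⟨D1, hD1⟩ ⟨D2, hD2⟩
            rcases hchain.total hD1 hD2 with h | h
            · exact ⟨⟨D1, hD1⟩, le_rfl, Set.inter_subset_inter_left _ h⟩
            · exact ⟨⟨D2, hD2⟩, Set.inter_subset_inter_left _ h, le_rfl⟩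
          · rintro ⟨D, hD⟩
            obtain ⟨p, hp, hp2⟩ := (hcS hD).2.2 g
            exact ⟨p, hp, hp2⟩
          · rintro ⟨D, hD⟩
            exact ((hcS hD).2.1.inter (isClosed_singleton.preimage continuous_snd)).isCompact
          · rintro ⟨D, hD⟩
            exact (hcS hD).2.1.inter (isClosed_singleton.preimage continuous_snd)
        obtain ⟨p, hp⟩ := hne
        simp only [Set.mem_iInter, Set.mem_inter_iff, Set.mem_preimage,
          Set.mem_singleton_iff] at hp
        refine ⟨p, ?_, (hp ⟨y, hyc⟩).2⟩
        rw [Subgroup.mem_sInf]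
        intro D hD
        exact (hp ⟨D, hD⟩).1)
    obtain ⟨hCH0, hCclosed, hCsurj⟩ := hCS
    haveI : CompactSpace C := isCompact_iff_compactSpace.mp hCclosed.isCompact
    set β : C →* G := (MonoidHom.snd B G).comp C.subtype with hβ
    have hβc : Continuous β := continuous_snd.comp continuous_subtype_val
    have hβs : Surjective β := by
      intro g
      obtain ⟨c, hc, hc2⟩ := hCsurj g
      exact ⟨⟨c, hc⟩, hc2⟩
    have hβker : β.ker ≤ frattiniOpen C := by
      rw [frattiniOpen, le_iInf_iff]
      intro M
      rw [le_iInf_iff]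
      rintro ⟨hMopen, hMcoatom⟩
      by_contra h
      have htop : M ⊔ β.ker = ⊤ := hMcoatom.2 _ (left_lt_sup.mpr h)
      have hmapker : Subgroup.map β β.ker = ⊥ := by
        rw [eq_bot_iff]
        rintro y ⟨x, hx, rfl⟩
        exact hx
      have hmap : Subgroup.map β M = ⊤ := by
        have h1 : Subgroup.map β (M ⊔ β.ker) = ⊤ := by
          rw [htop, ← MonoidHom.range_eq_map, MonoidHom.range_eq_top_of_surjective _ hβs]
        rwa [Subgroup.map_sup, hmapker, sup_bot_eq] at h1
      set C' : Subgroup (B × G) := Subgroup.map C.subtype M with hC'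
      have hC'S : C' ∈ S := by
        refine ⟨le_trans (Subgroup.map_subtype_le M) hCH0, ?_, ?_⟩
        · have hMclosed : IsClosed (M : Set C) := Subgroup.isClosed_of_isOpen M hMopen
          have : (C' : Set (B × G)) = Subtype.val '' (M : Set C) := by
            ext p
            simp [hC', Subgroup.mem_map]
          rw [this]
          exact (hMclosed.isCompact.image continuous_subtype_val).isClosed
        · intro g
          obtain ⟨m, hm, hmg⟩ : ∃ m ∈ M, β m = g := by
            have : g ∈ Subgroup.map β M := hmap ▸ Subgroup.mem_top g
            exact this
          exact ⟨(m : B × G), ⟨m, hm, rfl⟩, hmg⟩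
      have hC'C : C' ≤ C := Subgroup.map_subtype_le M
      have heq : C' = C := hCmin C' hC'S hC'C
      apply hMcoatom.1
      rw [eq_top_iff]
      intro c _
      have : (c : B × G) ∈ C' := by rw [heq]; exact c.2
      obtain ⟨m, hm, hmc⟩ := this
      have : m = c := Subtype.ext hmc
      rwa [← this]
    clear_value β
    obtain ⟨γ, hγc, hγs, -⟩ := hfactor ↥C β ⟨hβc, hβs, hβker⟩
    set θ : C →* B := (MonoidHom.fst B G).comp C.subtype with hθ
    have hKtop : θ.range ⊔ frattini B = ⊤ := by
      rw [eq_top_iff]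
      intro b _
      obtain ⟨g, hg⟩ := hψs (QuotientGroup.mk b)
      obtain ⟨c, hcC, hc2⟩ := hCsurj g
      have hcH : f1 c = f2 c := hCH0 hcC
      have hmk : (QuotientGroup.mk c.1 : B ⧸ frattini B) = QuotientGroup.mk b := by
        have : (QuotientGroup.mk c.1 : B ⧸ frattini B) = ψ c.2 := hcH
        rw [this, hc2, hg]
      have hfr : c.1⁻¹ * b ∈ frattini B := (QuotientGroup.eq).mp hmk
      have hb : b = c.1 * (c.1⁻¹ * b) := by group
      rw [hb]
      exact Subgroup.mul_mem_sup ⟨⟨c, hcC⟩, rfl⟩ hfr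
    haveI : Finite (Subgroup B) := Finite.of_injective _ SetLike.coe_injective
    have hKeq : θ.range = ⊤ := frattini_nongenerating hKtop
    refine ⟨θ.comp γ, (continuous_fst.comp continuous_subtype_val).comp hγc, ?_⟩
    intro b
    have : b ∈ θ.range := hKeq ▸ Subgroup.mem_top b
    obtain ⟨c, hc⟩ := this
    obtain ⟨x, hx⟩ := hγs c
    exact ⟨x, by simp [hx, hc]⟩
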